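/- arXiv:math/0002070 — 3 statements merged into one kernel-verified Lean document; each statement's English description precedes it below -/
import Mathlib

section
/- Let G be a König-Egerváry graph. Then every α-critical edge of G is also μ-critical, i.e., if e ∈ E(G) satisfies α(G − e) > α(G), then μ(G − e) < μ(G). -/
open scoped Classical

namespace KEG

variable {V : Type*}

/-- `S` is a stable (independent) set of vertices of `G`. -/
def IsStable (G : SimpleGraph V) (S : Finset V) : Prop :=
  ∀ ⦃x⦄, x ∈ S → ∀ ⦃y⦄, y ∈ S → ¬G.Adj x y

/-- The stability number `α(G)`: maximum cardinality of a stable set. -/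
noncomputable def alphaNum (G : SimpleGraph V) : ℕ :=
  sSup {n | ∃ S : Finset V, IsStable G S ∧ S.card = n}

/-- `S` is a maximum stable set of `G`. -/
def IsMaxStable (G : SimpleGraph V) (S : Finset V) : Prop :=
  IsStable G S ∧ S.card = alphaNum G

/-- `M` is a matching of `G`: a set of edges of `G`, pairwise non-incident. -/
def IsMatching (G : SimpleGraph V) (M : Finset (Sym2 V)) : Prop :=
  (∀ e ∈ M, e ∈ G.edgeSet) ∧
    ∀ e ∈ M, ∀ f ∈ M, e ≠ f → ∀ v : V, v ∈ e → v ∉ f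

/-- The matching number `μ(G)`: maximum cardinality of a matching. -/
noncomputable def muNum (G : SimpleGraph V) : ℕ :=
  sSup {n | ∃ M : Finset (Sym2 V), IsMatching G M ∧ M.card = n}

/-- A perfect matching: a matching covering every vertex. -/
def IsPerfectMatching (G : SimpleGraph V) (M : Finset (Sym2 V)) : Prop :=
  IsMatching G M ∧ ∀ v : V, ∃ e ∈ M, v ∈ e

/-- A maximal matching: a matching such that no edge of `G` can be added to it
while keeping pairwise non-incidence, i.e. every edge of `G` outside `M` is
incident to an edge of `M`. -/
def IsMaximalMatching (G : SimpleGraph V) (M : Finset (Sym2 V)) : Prop :=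
  IsMatching G M ∧ ∀ e ∈ G.edgeSet, e ∉ M → ∃ f ∈ M, ∃ v : V, v ∈ e ∧ v ∈ f

/-- `G` is a König-Egerváry graph: `α(G) + μ(G) = |V(G)|`. -/
def KonigEgervary (G : SimpleGraph V) [Fintype V] : Prop :=
  alphaNum G + muNum G = Fintype.card V

/-- `e` is an α-critical edge of `G`: `α(G - e) > α(G)`. -/
def IsAlphaCritical (G : SimpleGraph V) (e : Sym2 V) : Prop :=
  e ∈ G.edgeSet ∧ alphaNum G < alphaNum (G.deleteEdges {e})

/-- `e` is a μ-critical edge of `G`: `μ(G - e) < μ(G)`. -/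
def IsMuCritical (G : SimpleGraph V) (e : Sym2 V) : Prop :=
  e ∈ G.edgeSet ∧ muNum (G.deleteEdges {e}) < muNum G

/-- `core(G)`: the set of vertices belonging to every maximum stable set of `G`. -/
def core (G : SimpleGraph V) : Set V :=
  {v | ∀ S : Finset V, IsMaxStable G S → v ∈ S}

/-- `ξ(G) = |core(G)|`. -/
noncomputable def xi (G : SimpleGraph V) : ℕ := (core G).ncard

/-- `σ(G)`: the number of vertices belonging to no maximum stable set of `G`. -/
noncomputable def sigmaNum (G : SimpleGraph V) : ℕ :=
  {v : V | ∀ S : Finset V, IsMaxStable G S → v ∉ S}.ncard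

/-- `η(G)`: the number of α-critical edges of `G`. -/
noncomputable def eta (G : SimpleGraph V) : ℕ :=
  {e : Sym2 V | IsAlphaCritical G e}.ncard

/-- `N(A)`: the set of vertices adjacent to some vertex of `A`. -/
def nbhd (G : SimpleGraph V) (A : Set V) : Set V :=
  {v | ∃ a ∈ A, G.Adj a v}

/-- `N[A] = A ∪ N(A)`: the closed neighborhood of `A`. -/
def closedNbhd (G : SimpleGraph V) (A : Set V) : Set V :=
  A ∪ nbhd G A


lemma alpha_spec {V : Type*} [Fintype V] (G : SimpleGraph V) :
    ∃ S : Finset V, IsStable G S ∧ S.card = alphaNum G := by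
  have h : alphaNum G ∈ {n | ∃ S : Finset V, IsStable G S ∧ S.card = n} := by
    apply Nat.sSup_mem
    · exact ⟨0, ∅, fun x hx => absurd hx (Finset.notMem_empty x), Finset.card_empty⟩
    · exact ⟨Fintype.card V, fun n ⟨S, _, hc⟩ => hc ▸ Finset.card_le_univ S⟩
  exact h

lemma mu_spec {V : Type*} [Fintype V] (G : SimpleGraph V) :
    ∃ M : Finset (Sym2 V), IsMatching G M ∧ M.card = muNum G := by
  have h : muNum G ∈ {n | ∃ M : Finset (Sym2 V), IsMatching G M ∧ M.card = n} := by
    apply Nat.sSup_mem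
    · exact ⟨0, ∅, ⟨fun e he => absurd he (Finset.notMem_empty e),
        fun e he => absurd he (Finset.notMem_empty e)⟩, Finset.card_empty⟩
    · exact ⟨Fintype.card (Sym2 V), fun n ⟨M, _, hc⟩ => hc ▸ Finset.card_le_univ M⟩
  exact h

lemma stable_card_le (G : SimpleGraph V) (S : Finset V) (hS : IsStable G S) [Fintype V] :
    S.card ≤ alphaNum G :=
  le_csSup ⟨Fintype.card V, fun n ⟨T, _, hc⟩ => hc ▸ Finset.card_le_univ T⟩ ⟨S, hS, rfl⟩

lemma matching_card_le (G : SimpleGraph V) (M : Finset (Sym2 V)) (hM : IsMatching G M)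
    [Fintype V] : M.card ≤ muNum G :=
  le_csSup ⟨Fintype.card (Sym2 V), fun n ⟨N, _, hc⟩ => hc ▸ Finset.card_le_univ N⟩ ⟨M, hM, rfl⟩

/-- For any graph, any stable set and any matching: |S| + |M| ≤ |V|. -/
lemma stable_add_matching_le {V : Type*} [Fintype V] (G : SimpleGraph V)
    (S : Finset V) (hS : IsStable G S) (M : Finset (Sym2 V)) (hM : IsMatching G M) :
    S.card + M.card ≤ Fintype.card V := by
  -- each edge of M has a vertex outside S
  have hpick : ∀ f ∈ M, ∃ v, v ∈ f ∧ v ∉ S := by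
    intro f hf
    induction f using Sym2.ind with
    | _ a b =>
    have hadj : G.Adj a b := (G.mem_edgeSet).mp (hM.1 _ hf)
    by_cases ha : a ∈ S
    · by_cases hb : b ∈ S
      · exact absurd hadj (hS ha hb)
      · exact ⟨b, Sym2.mem_mk_right a b, hb⟩
    · exact ⟨a, Sym2.mem_mk_left a b, ha⟩
  classical
  set g : Sym2 V → V := fun f => if h : ∃ v, v ∈ f ∧ v ∉ S then h.choose else f.out.1 with hg
  have hgmem : ∀ f ∈ M, g f ∈ f ∧ g f ∉ S := by
    intro f hf
    have h := hpick f hf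
    simp only [hg, dif_pos h]
    exact h.choose_spec
  have hinj : Set.InjOn g M := by
    intro f hf f' hf' hgf
    by_contra hne
    exact hM.2 f hf f' hf' hne (g f) (hgmem f hf).1 (hgf ▸ (hgmem f' hf').1)
  have himg : M.image g ⊆ Sᶜ := by
    intro v hv
    obtain ⟨f, hf, rfl⟩ := Finset.mem_image.mp hv
    simpa using (hgmem f hf).2
  have hcard : M.card = (M.image g).card := (Finset.card_image_of_injOn hinj).symm
  have h1 : (M.image g).card ≤ Sᶜ.card := Finset.card_le_card himg
  have h2 : Sᶜ.card = Fintype.card V - S.card := by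
    simp [Finset.card_compl]
  have h3 : S.card ≤ Fintype.card V := Finset.card_le_univ S
  omega

lemma alpha_add_mu_le {V : Type*} [Fintype V] (G : SimpleGraph V) :
    alphaNum G + muNum G ≤ Fintype.card V := by
  obtain ⟨S, hS, hSc⟩ := alpha_spec G
  obtain ⟨M, hM, hMc⟩ := mu_spec G
  rw [← hSc, ← hMc]
  exact stable_add_matching_le G S hS M hM

/-- In a König-Egerváry graph, every α-critical edge is also μ-critical. -/
theorem stmt_1 {V : Type*} [Fintype V] (G : SimpleGraph V)
    (hG : KonigEgervary G) (e : Sym2 V) (he : e ∈ G.edgeSet)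
    (hcrit : alphaNum G < alphaNum (G.deleteEdges {e})) :
    muNum (G.deleteEdges {e}) < muNum G := by
  have h := alpha_add_mu_le (G.deleteEdges {e})
  unfold KonigEgervary at hG
  omega

end KEG
end

section
/- Let G be a König-Egerváry graph with vertex set V, let core(G) be the intersection of all maximum stable sets of G, and let N(core(G)) be the set of vertices adjacent to some vertex of core(G). Then |core(G)| ≥ |N(core(G))|, and for every maximum stable set S of G one has |S − core(G)| = |(V − S) − N(core(G))|. -/
open scoped Classical

namespace KEG

variable {V : Type*}

section Aux

open Finset

variable {V : Type*} [Fintype V] {G : SimpleGraph V}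

lemma stable_empty (G : SimpleGraph V) : IsStable G (∅ : Finset V) := by
  intro x hx; simp at hx

lemma alpha_bdd (G : SimpleGraph V) :
    BddAbove {n | ∃ S : Finset V, IsStable G S ∧ S.card = n} := by
  refine ⟨Fintype.card V, ?_⟩
  rintro n ⟨S, -, rfl⟩
  simpa using S.card_le_univ

lemma exists_max_stable (G : SimpleGraph V) : ∃ S : Finset V, IsMaxStable G S := by
  have h : alphaNum G ∈ {n | ∃ S : Finset V, IsStable G S ∧ S.card = n} :=
    Nat.sSup_mem ⟨0, ∅, stable_empty G, by simp⟩ (alpha_bdd G)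
  obtain ⟨S, h1, h2⟩ := h
  exact ⟨S, h1, h2⟩

lemma mu_bdd (G : SimpleGraph V) :
    BddAbove {n | ∃ M : Finset (Sym2 V), IsMatching G M ∧ M.card = n} := by
  refine ⟨Fintype.card (Sym2 V), ?_⟩
  rintro n ⟨M, -, rfl⟩
  simpa using M.card_le_univ

lemma exists_max_matching (G : SimpleGraph V) :
    ∃ M : Finset (Sym2 V), IsMatching G M ∧ M.card = muNum G := by
  have h : muNum G ∈ {n | ∃ M : Finset (Sym2 V), IsMatching G M ∧ M.card = n} :=
    Nat.sSup_mem ⟨0, ∅, ⟨by simp, by simp⟩, by simp⟩ (mu_bdd G)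
  exact h

/-- Key lemma: in a KE graph, a maximum matching saturates the complement of every
maximum stable set, and each matching edge has exactly one endpoint in the stable set. -/
lemma keyA (hG : KonigEgervary G) {S : Finset V} (hS : IsMaxStable G S)
    {M : Finset (Sym2 V)} (hM : IsMatching G M) (hMc : M.card = muNum G) :
    (∀ v : V, v ∉ S → ∃ e ∈ M, v ∈ e) ∧
    (∀ e ∈ M, ∀ x y : V, e = s(x, y) → (x ∈ S ↔ y ∉ S)) := by
  classical
  -- every edge of M has an endpoint outside S
  have hex : ∀ e ∈ M, ∃ v, v ∈ e ∧ v ∉ S := by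
    intro e he
    induction e using Sym2.ind with
    | _ x y =>
      have hadj : G.Adj x y := (SimpleGraph.mem_edgeSet G).1 (hM.1 _ he)
      by_cases hx : x ∈ S
      · by_cases hy : y ∈ S
        · exact absurd hadj (hS.1 hx hy)
        · exact ⟨y, Sym2.mem_mk_right x y, hy⟩
      · exact ⟨x, Sym2.mem_mk_left x y, hx⟩
  set f : ∀ e ∈ M, V := fun e he => (hex e he).choose with hf
  have hfmem : ∀ e he, f e he ∈ e := fun e he => (hex e he).choose_spec.1
  have hfnot : ∀ e he, f e he ∉ S := fun e he => (hex e he).choose_spec.2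
  have hft : ∀ e he, f e he ∈ univ \ S := by
    intro e he; simp [hfnot e he]
  have hinj : ∀ e₁ e₂ h₁ h₂, f e₁ h₁ = f e₂ h₂ → e₁ = e₂ := by
    intro e₁ e₂ h₁ h₂ heq
    by_contra hne
    exact hM.2 e₁ h₁ e₂ h₂ hne _ (hfmem e₁ h₁) (heq ▸ hfmem e₂ h₂)
  have hcard : (univ \ S).card ≤ M.card := by
    have : (univ \ S).card = Fintype.card V - S.card := by
      rw [card_sdiff_of_subset (subset_univ S), card_univ]
    rw [this, hS.2, hMc]
    unfold KonigEgervary at hG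
    omega
  have hsurj := Finset.surj_on_of_inj_on_of_card_le f hft hinj hcard
  have hsat : ∀ v : V, v ∉ S → ∃ e ∈ M, v ∈ e := by
    intro v hv
    obtain ⟨e, he, hve⟩ := hsurj v (by simp [hv])
    exact ⟨e, he, hve ▸ hfmem e he⟩
  refine ⟨hsat, ?_⟩
  intro e he x y hexy
  have hadj : G.Adj x y := (SimpleGraph.mem_edgeSet G).1 (by rw [← hexy]; exact hM.1 _ he)
  have hne : x ≠ y := hadj.ne
  constructor
  · intro hx hy
    exact hS.1 hx hy hadj
  · intro hy
    by_contra hx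
    -- both endpoints outside S: contradiction
    have key : ∀ z : V, z ∉ S → z ∈ e → f e he = z := by
      intro z hz hze
      obtain ⟨e', he', hze'⟩ := hsurj z (by simp [hz])
      have : e = e' := by
        by_contra hne'
        exact hM.2 e he e' he' hne' z hze (hze' ▸ hfmem e' he')
      subst this
      exact hze'.symm
    have h1 : f e he = x := key x hx (by rw [hexy]; exact Sym2.mem_mk_left x y)
    have h2 : f e he = y := key y hy (by rw [hexy]; exact Sym2.mem_mk_right x y)
    exact hne (h1 ▸ h2)

end Aux

/-- In a König-Egerváry graph `G`, `|core(G)| ≥ |N(core(G))|`, and for every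
maximum stable set `S`, `|S - core(G)| = |(V - S) - N(core(G))|`. -/
theorem stmt_8 {V : Type*} [Fintype V] (G : SimpleGraph V)
    (hG : KonigEgervary G) :
    (nbhd G (core G)).ncard ≤ (core G).ncard ∧
      ∀ S : Finset V, IsMaxStable G S →
        ((S : Set V) \ core G).ncard = ((↑S : Set V)ᶜ \ nbhd G (core G)).ncard := by
  classical
  obtain ⟨M, hM, hMc⟩ := exists_max_matching G
  obtain ⟨S₀, hS₀⟩ := exists_max_stable G
  -- the mate function of the matching M
  set mate : V → V := fun v => if h : ∃ w, s(v, w) ∈ M then h.choose else v with hmate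
  have mate_spec : ∀ {v : V}, (∃ w, s(v, w) ∈ M) → s(v, mate v) ∈ M := by
    intro v h
    simp only [hmate, dif_pos h]
    exact h.choose_spec
  have uniq : ∀ {v w w' : V}, s(v, w) ∈ M → s(v, w') ∈ M → w = w' := by
    intro v w w' h1 h2
    by_cases heq : s(v, w) = s(v, w')
    · rcases Sym2.eq_iff.1 heq with ⟨-, h⟩ | ⟨h1', h2'⟩
      · exact h
      · rw [← h1', h2']
    · exact absurd (Sym2.mem_mk_left v w') (hM.2 _ h1 _ h2 heq v (Sym2.mem_mk_left v w))
  have mate_eq : ∀ {v w : V}, s(v, w) ∈ M → mate v = w := by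
    intro v w h
    exact uniq (mate_spec ⟨w, h⟩) h
  have cov_mem : ∀ {v : V} {e : Sym2 V}, e ∈ M → v ∈ e → ∃ w, s(v, w) ∈ M := by
    intro v e he hve
    obtain ⟨w, rfl⟩ := Sym2.mem_iff_exists.1 hve
    exact ⟨w, he⟩
  -- covered vertices
  set covered : Finset V := Finset.univ.filter (fun v => ∃ w, s(v, w) ∈ M) with hcov
  have mem_cov : ∀ {v : V}, v ∈ covered ↔ ∃ w, s(v, w) ∈ M := by
    intro v; simp [hcov]
  have mate_cov : ∀ {v : V}, v ∈ covered → mate v ∈ covered := by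
    intro v hv
    have h := mate_spec (mem_cov.1 hv)
    exact mem_cov.2 ⟨v, Sym2.eq_swap ▸ h⟩
  have mate_invol : ∀ {v : V}, v ∈ covered → mate (mate v) = v := by
    intro v hv
    have h := mate_spec (mem_cov.1 hv)
    exact mate_eq (Sym2.eq_swap ▸ h)
  have mate_adj : ∀ {v : V}, v ∈ covered → G.Adj v (mate v) := by
    intro v hv
    exact (SimpleGraph.mem_edgeSet G).1 (hM.1 _ (mate_spec (mem_cov.1 hv)))
  have mate_injOn : ∀ (A : Finset V), (∀ a ∈ A, a ∈ covered) → Set.InjOn mate A := by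
    intro A hA a ha b hb heq
    have := mate_invol (hA a ha)
    rw [heq, mate_invol (hA b hb)] at this
    exact this.symm
  -- consequences of keyA for every maximum stable set
  have sat : ∀ {T : Finset V}, IsMaxStable G T → ∀ {v : V}, v ∉ T → v ∈ covered := by
    intro T hT v hv
    obtain ⟨e, he, hve⟩ := (keyA hG hT hM hMc).1 v hv
    exact mem_cov.2 (cov_mem he hve)
  have side : ∀ {T : Finset V}, IsMaxStable G T → ∀ {v : V}, v ∈ covered →
      (v ∈ T ↔ mate v ∉ T) := by
    intro T hT v hv
    exact (keyA hG hT hM hMc).2 _ (mate_spec (mem_cov.1 hv)) v (mate v) rfl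
  -- uncovered vertices lie in the core
  have uncov_core : ∀ {v : V}, v ∉ covered → v ∈ core G := by
    intro v hv T hT
    by_contra hvT
    exact hv (sat hT hvT)
  -- core is contained in every maximum stable set
  have core_sub : ∀ {T : Finset V}, IsMaxStable G T → ∀ {v : V}, v ∈ core G → v ∈ T := by
    intro T hT v hv
    exact hv _ hT
  -- vertices of N(core) are in no maximum stable set
  have nb_not : ∀ {v : V}, v ∈ nbhd G (core G) → ∀ {T : Finset V}, IsMaxStable G T → v ∉ T := by
    intro v hv T hT hvT
    obtain ⟨a, ha, hadj⟩ := hv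
    exact hT.1 (core_sub hT ha) hvT hadj
  -- finsets for core and N(core)
  set coreF : Finset V := Finset.univ.filter (· ∈ core G) with hcoreF
  set nbF : Finset V := Finset.univ.filter (· ∈ nbhd G (core G)) with hnbF
  have coreF_coe : (coreF : Set V) = core G := by ext v; simp [hcoreF]
  have nbF_coe : (nbF : Set V) = nbhd G (core G) := by ext v; simp [hnbF]
  -- N(core) ⊆ covered, and mate maps it into core ∩ covered
  have nb_cov : ∀ {v : V}, v ∈ nbF → v ∈ covered := by
    intro v hv
    have := nb_not (by simpa [hnbF] using hv) hS₀
    exact sat hS₀ this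
  have mate_nb : ∀ v ∈ nbF, mate v ∈ coreF ∩ covered := by
    intro v hv
    have hvc := nb_cov hv
    have hmem : mate v ∈ core G := by
      intro T hT
      have hvT := nb_not (by simpa [hnbF] using hv) hT
      have := side hT hvc
      tauto
    simp only [Finset.mem_inter, hcoreF, Finset.mem_filter, Finset.mem_univ, true_and]
    exact ⟨hmem, mate_cov hvc⟩
  have mate_core : ∀ v ∈ coreF ∩ covered, mate v ∈ nbF := by
    intro v hv
    rw [Finset.mem_inter] at hv
    have hvcore : v ∈ core G := by simpa [hcoreF] using hv.1
    have : mate v ∈ nbhd G (core G) := ⟨v, hvcore, mate_adj hv.2⟩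
    simpa [hnbF] using this
  -- |coreF ∩ covered| = |nbF|
  have hAB : (coreF ∩ covered).card = nbF.card := by
    apply le_antisymm
    · exact Finset.card_le_card_of_injOn mate mate_core
        (mate_injOn _ (fun a ha => (Finset.mem_inter.1 ha).2))
    · exact Finset.card_le_card_of_injOn mate mate_nb
        (mate_injOn _ (fun a ha => nb_cov ha))
  -- coreF \ covered = univ \ covered
  have hUC : coreF \ covered = Finset.univ \ covered := by
    ext v
    simp only [Finset.mem_sdiff, Finset.mem_univ, true_and, hcoreF, Finset.mem_filter]
    constructor
    · rintro ⟨-, h⟩; exact h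
    · intro h; exact ⟨uncov_core h, h⟩
  -- card computations
  have n_eq : Fintype.card V = alphaNum G + muNum G := hG.symm
  -- covered \ S₀ = univ \ S₀
  have hcovS : covered \ S₀ = Finset.univ \ S₀ := by
    ext v
    simp only [Finset.mem_sdiff, Finset.mem_univ, true_and]
    exact ⟨fun h => h.2, fun h => ⟨sat hS₀ h, h⟩⟩
  have hcS₀ : (Finset.univ \ S₀).card = muNum G := by
    rw [Finset.card_sdiff_of_subset (Finset.subset_univ _), Finset.card_univ, hS₀.2]
    omega
  -- mate is a bijection between covered ∩ S₀ and univ \ S₀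
  have h1 : ∀ v ∈ covered ∩ S₀, mate v ∈ Finset.univ \ S₀ := by
    intro v hv
    rw [Finset.mem_inter] at hv
    have := (side hS₀ hv.1).1 hv.2
    simp [this]
  have h2 : ∀ v ∈ Finset.univ \ S₀, mate v ∈ covered ∩ S₀ := by
    intro v hv
    rw [Finset.mem_sdiff] at hv
    have hvc : v ∈ covered := sat hS₀ hv.2
    have := side hS₀ hvc
    rw [Finset.mem_inter]
    refine ⟨mate_cov hvc, ?_⟩
    tauto
  have hcovS₀ : (covered ∩ S₀).card = muNum G := by
    rw [← hcS₀]
    apply le_antisymm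
    · exact Finset.card_le_card_of_injOn mate h1
        (mate_injOn _ (fun a ha => (Finset.mem_inter.1 ha).1))
    · exact Finset.card_le_card_of_injOn mate h2
        (mate_injOn _ (fun a ha => sat hS₀ (Finset.mem_sdiff.1 ha).2))
  have hcovcard : covered.card = 2 * muNum G := by
    have := Finset.card_sdiff_add_card_inter covered S₀
    rw [hcovS, hcS₀, hcovS₀] at this
    omega
  have huncov : (Finset.univ \ covered).card + 2 * muNum G = Fintype.card V := by
    rw [Finset.card_sdiff_of_subset (Finset.subset_univ _), Finset.card_univ, hcovcard]
    have : covered.card ≤ Fintype.card V := by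
      simpa using covered.card_le_univ
    omega
  -- μ ≤ α
  have hmua : muNum G ≤ alphaNum G := by
    have h3 : (covered ∩ S₀).card ≤ S₀.card := Finset.card_le_card (Finset.inter_subset_right)
    rw [hcovS₀, hS₀.2] at h3
    exact h3
  -- ξ + μ = |N(core)| + α
  have hxi : coreF.card + muNum G = nbF.card + alphaNum G := by
    have := Finset.card_sdiff_add_card_inter coreF covered
    rw [hUC, hAB] at this
    omega
  have hcore_ncard : (core G).ncard = coreF.card := by
    rw [← coreF_coe, Set.ncard_coe_finset]
  have hnb_ncard : (nbhd G (core G)).ncard = nbF.card := by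
    rw [← nbF_coe, Set.ncard_coe_finset]
  constructor
  · rw [hcore_ncard, hnb_ncard]; omega
  · intro S hS
    have hcoreS : coreF ⊆ S := by
      intro v hv
      exact core_sub hS (by simpa [hcoreF] using hv)
    have hnbS : nbF ⊆ Finset.univ \ S := by
      intro v hv
      simp only [Finset.mem_sdiff, Finset.mem_univ, true_and]
      exact nb_not (by simpa [hnbF] using hv) hS
    have e1 : ((S : Set V) \ core G) = ((S \ coreF : Finset V) : Set V) := by
      rw [Finset.coe_sdiff, coreF_coe]
    have e2 : ((↑S : Set V)ᶜ \ nbhd G (core G)) = (((Finset.univ \ S) \ nbF : Finset V) : Set V) := by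
      rw [Finset.coe_sdiff, Finset.coe_sdiff, nbF_coe, Finset.coe_univ]
      rw [Set.compl_eq_univ_diff]
    rw [e1, e2, Set.ncard_coe_finset, Set.ncard_coe_finset]
    rw [Finset.card_sdiff_of_subset hcoreS, Finset.card_sdiff_of_subset hnbS,
      Finset.card_sdiff_of_subset (Finset.subset_univ _), Finset.card_univ, hS.2]
    have hnble : nbF.card ≤ muNum G := by
      have := Finset.card_le_card hnbS
      rw [Finset.card_sdiff_of_subset (Finset.subset_univ _), Finset.card_univ, hS.2] at this
      omega
    have hcle : coreF.card ≤ alphaNum G := by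
      have := Finset.card_le_card hcoreS
      rw [hS.2] at this
      exact this
    omega


end KEG
end

section
/- Let G be any finite simple graph and let G₀ = G − N[core(G)] be the subgraph induced by the vertices lying outside the closed neighborhood of core(G). Then an edge e = xy of G is α-critical in G if and only if both endpoints of e lie in V(G₀) and e is an α-critical edge of G₀. -/
open scoped Classical

namespace KEG

variable {V : Type*}

section AuxLemmas

lemma isStable_subset {G : SimpleGraph V} {S T : Finset V} (hT : IsStable G T) (hST : S ⊆ T) :
    IsStable G S := fun _ hx _ hy => hT (hST hx) (hST hy)

lemma bddAbove_stable [Fintype V] (G : SimpleGraph V) :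
    BddAbove {n | ∃ S : Finset V, IsStable G S ∧ S.card = n} := by
  refine ⟨Fintype.card V, ?_⟩
  rintro n ⟨S, -, rfl⟩
  exact S.card_le_univ

lemma exists_maxStable [Fintype V] (G : SimpleGraph V) :
    ∃ S : Finset V, IsStable G S ∧ S.card = alphaNum G := by
  have h0 : (0 : ℕ) ∈ {n | ∃ S : Finset V, IsStable G S ∧ S.card = n} :=
    ⟨∅, fun x hx => absurd hx (Finset.notMem_empty x), rfl⟩
  exact Nat.sSup_mem ⟨0, h0⟩ (bddAbove_stable G)

lemma card_le_alpha [Fintype V] {G : SimpleGraph V} {S : Finset V} (h : IsStable G S) :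
    S.card ≤ alphaNum G :=
  le_csSup (bddAbove_stable G) ⟨S, h, rfl⟩

lemma alpha_lt_iff [Fintype V] {G H : SimpleGraph V} :
    alphaNum G < alphaNum H ↔ ∃ S : Finset V, IsStable H S ∧ S.card = alphaNum G + 1 := by
  constructor
  · intro h
    obtain ⟨S, hS, hc⟩ := exists_maxStable H
    obtain ⟨T, hTS, hTc⟩ := S.exists_subset_card_eq (by omega : alphaNum G + 1 ≤ S.card)
    exact ⟨T, isStable_subset hS hTS, hTc⟩
  · rintro ⟨S, hS, hc⟩
    have := card_le_alpha hS
    omega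

end AuxLemmas

/-- An edge `xy` of `G` is α-critical in `G` iff both its endpoints lie outside
`N[core(G)]` and it is an α-critical edge of the induced subgraph
`G₀ = G - N[core(G)]`. -/
theorem stmt_13 {V : Type*} [Fintype V] (G : SimpleGraph V)
    (W : Set V) (hW : W = (closedNbhd G (core G))ᶜ)
    (x y : V) (hxy : G.Adj x y) :
    IsAlphaCritical G s(x, y) ↔
      ∃ (hx : x ∈ W) (hy : y ∈ W),
        IsAlphaCritical (G.induce W) s((⟨x, hx⟩ : ↥W), (⟨y, hy⟩ : ↥W)) := by
  classical
  haveI : Fintype ↥W := Fintype.ofFinite _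
  have hCfin : (core G).Finite := Set.toFinite _
  set C : Finset V := hCfin.toFinset with hCdef
  have hCmem : ∀ v, v ∈ C ↔ v ∈ core G := fun v => hCfin.mem_toFinset
  -- basic facts about W and core
  have hWspec : ∀ v, v ∈ W ↔ v ∉ closedNbhd G (core G) := by
    intro v; rw [hW]; rfl
  have hCoreNotW : ∀ v ∈ core G, v ∉ W := by
    intro v hv hvW
    exact (hWspec v).1 hvW (Or.inl hv)
  have hNoEdge : ∀ c ∈ core G, ∀ w ∈ W, ¬ G.Adj c w := by
    intro c hc w hw hadj
    exact (hWspec w).1 hw (Or.inr ⟨c, hc, hadj⟩)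
  obtain ⟨S₀, hS₀, hS₀c⟩ := exists_maxStable G
  have hCsubMax : ∀ S : Finset V, IsMaxStable G S → C ⊆ S := by
    intro S hS v hv
    exact (hCmem v).1 hv S hS
  have hCstable : IsStable G C :=
    isStable_subset hS₀ (hCsubMax S₀ ⟨hS₀, hS₀c⟩)
  -- adjacency in the induced graph
  have hG0adj : ∀ a b : ↥W, (G.induce W).Adj a b ↔ G.Adj ↑a ↑b := by
    intro a b; exact SimpleGraph.comap_adj
  have hsym : ∀ (a b : ↥W) (hx' : x ∈ W) (hy' : y ∈ W),
      (s(a, b) = s((⟨x, hx'⟩ : ↥W), (⟨y, hy'⟩ : ↥W))) ↔ s((a : V), (b : V)) = s(x, y) := by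
    intro a b hx' hy'
    simp [Sym2.eq_iff, Subtype.ext_iff]
  -- combining a stable set of (a subgraph of) G supported on W with the core
  have hcomb : ∀ (T : Finset ↥W) (H : SimpleGraph V), H ≤ G →
      (∀ a ∈ T, ∀ b ∈ T, ¬ H.Adj ↑a ↑b) →
      IsStable H (C ∪ T.image Subtype.val) ∧
        (C ∪ T.image Subtype.val).card = C.card + T.card := by
    intro T H hle hT
    have hdisj : Disjoint C (T.image Subtype.val) := by
      rw [Finset.disjoint_left]
      intro v hvC hvT
      obtain ⟨a, _, rfl⟩ := Finset.mem_image.1 hvT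
      exact hCoreNotW _ ((hCmem _).1 hvC) a.2
    constructor
    · intro u hu v hv hadj
      rcases Finset.mem_union.1 hu with hu | hu <;> rcases Finset.mem_union.1 hv with hv | hv
      · exact hCstable hu hv (hle hadj)
      · obtain ⟨b, _, rfl⟩ := Finset.mem_image.1 hv
        exact hNoEdge u ((hCmem u).1 hu) b b.2 (hle hadj)
      · obtain ⟨a, _, rfl⟩ := Finset.mem_image.1 hu
        exact hNoEdge v ((hCmem v).1 hv) a a.2 (hle hadj).symm
      · obtain ⟨a, ha, rfl⟩ := Finset.mem_image.1 hu
        obtain ⟨b, hb, rfl⟩ := Finset.mem_image.1 hv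
        exact hT a ha b hb hadj
    · rw [Finset.card_union_of_disjoint hdisj,
        Finset.card_image_of_injective _ Subtype.val_injective]
  -- splitting a stable set containing the core into the core and a part in W
  have hsplit : ∀ (S : Finset V) (H : SimpleGraph V), IsStable H S → C ⊆ S →
      (∀ v ∈ S, v ∉ C → v ∈ W) →
      ∃ T : Finset ↥W, (∀ a ∈ T, ∀ b ∈ T, ¬ H.Adj ↑a ↑b) ∧ T.card = S.card - C.card := by
    intro S H hS hCS hSW
    refine ⟨(S \ C).subtype (· ∈ W), ?_, ?_⟩
    · intro a ha b hb
      have ha' := Finset.mem_sdiff.1 (Finset.mem_subtype.1 ha)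
      have hb' := Finset.mem_sdiff.1 (Finset.mem_subtype.1 hb)
      exact hS ha'.1 hb'.1
    · rw [Finset.card_subtype, Finset.filter_true_of_mem, Finset.card_sdiff_of_subset hCS]
      intro v hv
      have hv' := Finset.mem_sdiff.1 hv
      exact hSW v hv'.1 hv'.2
  -- the key identity α(G) = α(G₀) + |core G|
  have halpha : alphaNum G = alphaNum (G.induce W) + C.card := by
    obtain ⟨S, hS, hSc⟩ := exists_maxStable G
    have hCS : C ⊆ S := hCsubMax S ⟨hS, hSc⟩
    have hSW : ∀ v ∈ S, v ∉ C → v ∈ W := by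
      intro v hvS hvC
      rw [hWspec]
      rintro (hvcore | ⟨c, hc, hadj⟩)
      · exact hvC ((hCmem v).2 hvcore)
      · exact hS (hCS ((hCmem c).2 hc)) hvS hadj
    obtain ⟨T, hT, hTc⟩ := hsplit S G hS hCS hSW
    have h1 : S.card - C.card ≤ alphaNum (G.induce W) := by
      rw [← hTc]
      exact card_le_alpha (fun a ha b hb hadj => hT a ha b hb ((hG0adj a b).1 hadj))
    obtain ⟨T', hT', hT'c⟩ := exists_maxStable (G.induce W)
    obtain ⟨hstab, hcard⟩ := hcomb T' G le_rfl
      (fun a ha b hb hadj => hT' ha hb ((hG0adj a b).2 hadj))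
    have h2 : C.card + alphaNum (G.induce W) ≤ alphaNum G := by
      rw [← hT'c, ← hcard]; exact card_le_alpha hstab
    have h3 : C.card ≤ S.card := Finset.card_le_card hCS
    omega
  constructor
  · rintro ⟨he, hlt⟩
    obtain ⟨S, hS, hSc⟩ := alpha_lt_iff.1 hlt
    -- both x and y belong to S
    have hxyS : x ∈ S ∧ y ∈ S := by
      by_contra hcon
      have hstab : IsStable G S := by
        intro u hu v hv hadj
        have hne : s(u, v) ≠ s(x, y) := by
          intro heq
          rcases Sym2.eq_iff.1 heq with ⟨rfl, rfl⟩ | ⟨rfl, rfl⟩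
          · exact hcon ⟨hu, hv⟩
          · exact hcon ⟨hv, hu⟩
        exact hS hu hv (SimpleGraph.deleteEdges_adj.2 ⟨hadj, fun hmem => hne (Set.mem_singleton_iff.1 hmem)⟩)
      have := card_le_alpha hstab
      omega
    -- S minus one endpoint is a maximum stable set of G
    have herase : ∀ z ∈ ({x, y} : Finset V), IsMaxStable G (S.erase z) := by
      intro z hz
      have hstab : IsStable G (S.erase z) := by
        intro u hu v hv hadj
        have hu' := Finset.mem_erase.1 hu
        have hv' := Finset.mem_erase.1 hv
        have hne : s(u, v) ≠ s(x, y) := by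
          intro heq
          rcases Finset.mem_insert.1 hz with rfl | hz'
          · rcases Sym2.eq_iff.1 heq with ⟨rfl, rfl⟩ | ⟨rfl, rfl⟩
            · exact hu'.1 rfl
            · exact hv'.1 rfl
          · have : z = y := Finset.mem_singleton.1 hz'
            subst this
            rcases Sym2.eq_iff.1 heq with ⟨rfl, rfl⟩ | ⟨rfl, rfl⟩
            · exact hv'.1 rfl
            · exact hu'.1 rfl
        exact hS hu'.2 hv'.2 (SimpleGraph.deleteEdges_adj.2 ⟨hadj, fun hmem => hne (Set.mem_singleton_iff.1 hmem)⟩)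
      have hle := card_le_alpha hstab
      have hzS : z ∈ S := by
        rcases Finset.mem_insert.1 hz with rfl | hz'
        · exact hxyS.1
        · rw [Finset.mem_singleton.1 hz']; exact hxyS.2
      have hcard : (S.erase z).card = S.card - 1 := Finset.card_erase_of_mem hzS
      exact ⟨hstab, by omega⟩
    have hMx := herase x (by simp)
    have hMy := herase y (by simp)
    have hxny : x ≠ y := hxy.ne
    -- x, y are not in the core and not adjacent to it
    have hnotcore : ∀ z ∈ ({x, y} : Finset V), z ∉ core G := by
      intro z hz hzcore
      have := hzcore (S.erase z) (herase z hz)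
      exact (Finset.mem_erase.1 this).1 rfl
    have hx : x ∈ W := by
      rw [hWspec]
      rintro (hxcore | ⟨c, hc, hadj⟩)
      · exact hnotcore x (by simp) hxcore
      · have hcS : c ∈ S.erase y := hc _ hMy
        have hxS : x ∈ S.erase y := Finset.mem_erase.2 ⟨hxny, hxyS.1⟩
        exact hMy.1 hcS hxS hadj
    have hy : y ∈ W := by
      rw [hWspec]
      rintro (hycore | ⟨c, hc, hadj⟩)
      · exact hnotcore y (by simp) hycore
      · have hcS : c ∈ S.erase x := hc _ hMx
        have hyS : y ∈ S.erase x := Finset.mem_erase.2 ⟨hxny.symm, hxyS.2⟩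
        exact hMx.1 hcS hyS hadj
    refine ⟨hx, hy, ?_, ?_⟩
    · rw [SimpleGraph.mem_edgeSet, hG0adj]
      exact hxy
    · -- produce a large stable set of G₀ - e
      have hCS : C ⊆ S := by
        intro v hv
        have := (hCmem v).1 hv (S.erase x) hMx
        exact Finset.mem_of_mem_erase this
      have hSW : ∀ v ∈ S, v ∉ C → v ∈ W := by
        intro v hvS hvC
        rw [hWspec]
        rintro (hvcore | ⟨c, hc, hadj⟩)
        · exact hvC ((hCmem v).2 hvcore)
        · have hcS : c ∈ S := hCS ((hCmem c).2 hc)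
          have hne : s(c, v) ≠ s(x, y) := by
            intro heq
            rcases Sym2.eq_iff.1 heq with ⟨rfl, rfl⟩ | ⟨rfl, rfl⟩
            · exact hnotcore c (by simp) hc
            · exact hnotcore c (by simp) hc
          exact hS hcS hvS (SimpleGraph.deleteEdges_adj.2 ⟨hadj, fun hmem => hne (Set.mem_singleton_iff.1 hmem)⟩)
      obtain ⟨T, hT, hTc⟩ := hsplit S (G.deleteEdges {s(x, y)}) hS hCS hSW
      rw [alpha_lt_iff]
      refine ⟨T, ?_, ?_⟩
      · intro a ha b hb hadj
        rw [SimpleGraph.deleteEdges_adj, hG0adj] at hadj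
        refine hT a ha b hb (SimpleGraph.deleteEdges_adj.2 ⟨hadj.1, fun hmem => hadj.2 ?_⟩)
        exact Set.mem_singleton_iff.2 ((hsym a b hx hy).2 (Set.mem_singleton_iff.1 hmem))
      · have h3 : C.card ≤ S.card := Finset.card_le_card hCS
        omega
  · rintro ⟨hx, hy, he', hlt⟩
    refine ⟨hxy, ?_⟩
    obtain ⟨T, hT, hTc⟩ := alpha_lt_iff.1 hlt
    have hTstab : ∀ a ∈ T, ∀ b ∈ T, ¬ (G.deleteEdges {s(x, y)}).Adj ↑a ↑b := by
      intro a ha b hb hadj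
      rw [SimpleGraph.deleteEdges_adj] at hadj
      refine hT ha hb (SimpleGraph.deleteEdges_adj.2 ⟨(hG0adj a b).2 hadj.1, fun hmem => hadj.2 ?_⟩)
      exact Set.mem_singleton_iff.2 ((hsym a b hx hy).1 (Set.mem_singleton_iff.1 hmem))
    obtain ⟨hstab, hcard⟩ := hcomb T (G.deleteEdges {s(x, y)}) (SimpleGraph.deleteEdges_le _) hTstab
    rw [alpha_lt_iff]
    exact ⟨C ∪ T.image Subtype.val, hstab, by omega⟩

end KEG
end
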